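/- Let ρ > 0, μ = 1/ρ, and let Y₁,…,Yₙ be independent, identically distributed exponential random variables with density p(y) = ρe^{−ρy} on [0,∞); let Ȳₙ = (Y₁+⋯+Yₙ)/n. Then for every λ ∈ (0,1) and every integer n ≥ 1, Pr[Ȳₙ ≤ λμ] ≥ exp(−n·[G(λ) + ln(2πn)/(2n) + 1/(12n²)]), where G(λ) = λ − 1 − ln λ. -/

import Mathlib

open MeasureTheory ProbabilityTheory Real Filter Stirling


lemma stirling_diff_le (m : ℕ) :
    Real.log (stirlingSeq (m + 1)) - Real.log (stirlingSeq (m + 2)) ≤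
      1 / (12 * (m + 1 : ℝ) * ((m : ℝ) + 2)) := by
  set x : ℝ := (1 / (2 * (↑(m + 1) : ℝ) + 1)) ^ 2 with hx
  have hx_nonneg : (0 : ℝ) ≤ x := sq_nonneg _
  have hx_lt : x < 1 := by
    rw [hx, one_div, inv_pow]
    exact inv_lt_one_of_one_lt₀ (one_lt_pow₀ (lt_add_of_pos_left _ <| by positivity) two_ne_zero)
  have g : HasSum (fun k : ℕ => (1 : ℝ) / 3 * x ^ (k + 1)) (1 / 3 * (x / (1 - x))) := by
    have h := (hasSum_geometric_of_lt_one hx_nonneg hx_lt).mul_left ((1 : ℝ) / 3 * x)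
    have e1 : (fun k : ℕ => (1 : ℝ) / 3 * x ^ (k + 1)) = fun k : ℕ => (1 / 3 * x) * x ^ k := by
      funext k; ring
    have e2 : (1 : ℝ) / 3 * (x / (1 - x)) = (1 / 3 * x) * (1 - x)⁻¹ := by ring
    rw [e1, e2]; exact h
  have hab : ∀ k : ℕ, (1 : ℝ) / (2 * ↑(k + 1) + 1) * x ^ (k + 1) ≤ 1 / 3 * x ^ (k + 1) := by
    intro k
    have : (1 : ℝ) / (2 * ↑(k + 1) + 1) ≤ 1 / 3 := by
      apply one_div_le_one_div_of_le (by norm_num)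
      push_cast; linarith [Nat.cast_nonneg (α := ℝ) k]
    exact mul_le_mul_of_nonneg_right this (pow_nonneg hx_nonneg _)
  have key := hasSum_le hab (log_stirlingSeq_diff_hasSum m) g
  refine key.trans (le_of_eq ?_)
  have h1 : (2 * (↑(m + 1) : ℝ) + 1) ^ 2 ≠ 0 := by positivity
  rw [hx]
  push_cast at hx_lt ⊢
  have d1 : (2 * ((m : ℝ) + 1) + 1) ≠ 0 := by positivity
  have d2 : 1 - (1 / (2 * ((m : ℝ) + 1) + 1)) ^ 2 ≠ 0 := by
    have := sub_pos.mpr hx_lt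
    rw [hx] at this; push_cast at this; exact ne_of_gt this
  field_simp
  have d3 : (24 + (m : ℝ) * 36 + (m : ℝ) ^ 2 * 12) ≠ 0 := by positivity
  rw [div_eq_iff (by ring_nf; positivity)]; ring

lemma stirling_tail (k j : ℕ) :
    Real.log (stirlingSeq (k + 1)) - Real.log (stirlingSeq (k + 1 + j)) ≤
      1 / (12 * ((k : ℝ) + 1)) - 1 / (12 * ((k : ℝ) + 1 + j)) := by
  induction j with
  | zero => simp
  | succ j ih =>
    have h := stirling_diff_le (k + j)
    have e : k + 1 + (j + 1) = (k + j) + 2 := by ring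
    have e2 : k + 1 + j = (k + j) + 1 := by ring
    rw [e]
    have key : Real.log (stirlingSeq (k + 1)) - Real.log (stirlingSeq ((k + j) + 2)) =
        (Real.log (stirlingSeq (k + 1)) - Real.log (stirlingSeq (k + 1 + j)))
        + (Real.log (stirlingSeq ((k + j) + 1)) - Real.log (stirlingSeq ((k + j) + 2))) := by
      rw [e2]; ring
    rw [key]
    have harith : 1 / (12 * (↑(k + j) + 1 : ℝ) * (↑(k + j) + 2)) =
        1 / (12 * ((k : ℝ) + 1 + j)) - 1 / (12 * ((k : ℝ) + 1 + (j + 1))) := by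
      push_cast
      rw [div_sub_div _ _ (by positivity) (by positivity), div_eq_div_iff (by positivity) (by positivity)]
      ring
    push_cast at h ⊢
    push_cast at harith
    linarith

lemma stirling_le (k : ℕ) :
    Real.log (stirlingSeq (k + 1)) ≤ Real.log (Real.sqrt Real.pi) + 1 / (12 * ((k : ℝ) + 1)) := by
  have hlim : Tendsto (fun j : ℕ => Real.log (stirlingSeq (j + (k + 1)))) atTop
      (nhds (Real.log (Real.sqrt Real.pi))) := by
    have h1 : Tendsto (fun j : ℕ => stirlingSeq (j + (k + 1))) atTop (nhds (Real.sqrt Real.pi)) :=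
      Stirling.tendsto_stirlingSeq_sqrt_pi.comp (tendsto_add_atTop_nat (k + 1))
    exact ((Real.continuousAt_log (ne_of_gt (Real.sqrt_pos.mpr Real.pi_pos))).tendsto).comp h1
  have hle : ∀ j : ℕ, Real.log (stirlingSeq (k + 1)) - 1 / (12 * ((k : ℝ) + 1)) ≤
      Real.log (stirlingSeq (j + (k + 1))) := by
    intro j
    have h := stirling_tail k j
    have e : j + (k + 1) = k + 1 + j := by omega
    rw [e]
    have hnn : (0 : ℝ) ≤ 1 / (12 * ((k : ℝ) + 1 + j)) := by positivity
    linarith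
  have := ge_of_tendsto hlim (Filter.Eventually.of_forall hle)
  linarith

lemma factorial_le_stirling (n : ℕ) (hn : 1 ≤ n) :
    (n.factorial : ℝ) ≤ Real.sqrt (2 * Real.pi * n) * ((n : ℝ) / Real.exp 1) ^ n
      * Real.exp (1 / (12 * (n : ℝ))) := by
  obtain ⟨k, rfl⟩ := Nat.exists_eq_add_of_le hn
  have hpos : 0 < stirlingSeq (1 + k) := by
    rw [Nat.add_comm]; exact Stirling.stirlingSeq'_pos k
  have hlog := stirling_le k
  rw [Nat.add_comm 1 k] at *
  have hs : stirlingSeq (k + 1) ≤ Real.sqrt Real.pi * Real.exp (1 / (12 * ((k : ℝ) + 1))) := by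
    have := Real.exp_le_exp.mpr hlog
    rwa [Real.exp_log hpos, Real.exp_add, Real.exp_log (Real.sqrt_pos.mpr Real.pi_pos)] at this
  have hfac : ((k+1).factorial : ℝ) = stirlingSeq (k + 1) *
      (Real.sqrt (2 * ((k : ℝ) + 1)) * (((k : ℝ) + 1) / Real.exp 1) ^ (k + 1)) := by
    rw [stirlingSeq]
    push_cast
    rw [div_mul_cancel₀]
    positivity
  rw [hfac]
  have hsqrt : Real.sqrt Real.pi * Real.sqrt (2 * ((k : ℝ) + 1)) =
      Real.sqrt (2 * Real.pi * ((k : ℝ) + 1)) := by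
    rw [← Real.sqrt_mul Real.pi_pos.le]
    ring_nf
  calc stirlingSeq (k + 1) * (Real.sqrt (2 * ((k : ℝ) + 1)) * (((k : ℝ) + 1) / Real.exp 1) ^ (k + 1))
      ≤ (Real.sqrt Real.pi * Real.exp (1 / (12 * ((k : ℝ) + 1)))) *
        (Real.sqrt (2 * ((k : ℝ) + 1)) * (((k : ℝ) + 1) / Real.exp 1) ^ (k + 1)) := by
        apply mul_le_mul_of_nonneg_right hs
        positivity
    _ = Real.sqrt (2 * Real.pi * ((k : ℝ) + 1)) * (((k : ℝ) + 1) / Real.exp 1) ^ (k + 1)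
          * Real.exp (1 / (12 * ((k : ℝ) + 1))) := by
        rw [← hsqrt]; ring
    _ = Real.sqrt (2 * Real.pi * ↑(k + 1)) * ((↑(k + 1) : ℝ) / Real.exp 1) ^ (k + 1)
          * Real.exp (1 / (12 * (↑(k + 1) : ℝ))) := by push_cast; ring

lemma map_tuple_eq_pi {Omega : Type*} [MeasurableSpace Omega] (P : Measure Omega)
    [IsProbabilityMeasure P] {n : ℕ} (rho : ℝ) (hrho : 0 < rho)
    (Y : Fin n → Omega → ℝ) (hmeas : ∀ i, Measurable (Y i))
    (hindep : iIndepFun Y P)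
    (hdist : ∀ i, Measure.map (Y i) P = expMeasure rho) :
    Measure.map (fun ω i => Y i ω) P = Measure.pi (fun _ : Fin n => expMeasure rho) := by
  haveI := isProbabilityMeasure_expMeasure hrho
  refine (Measure.pi_eq (μ := fun _ : Fin n => expMeasure rho) ?_).symm
  intro s hs
  rw [Measure.map_apply (measurable_pi_lambda _ fun i => hmeas i) (MeasurableSet.univ_pi hs)]
  have hpre : (fun ω i => Y i ω) ⁻¹' Set.pi Set.univ s = ⋂ i ∈ Finset.univ, Y i ⁻¹' s i := by
    ext ω; simp [Set.mem_pi]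
  rw [hpre, hindep.measure_inter_preimage_eq_mul Finset.univ (fun i _ => hs i)]
  refine Finset.prod_congr rfl fun i _ => ?_
  rw [← hdist i, Measure.map_apply (hmeas i) (hs i)]

lemma pi_exp_sum_ge (rho : ℝ) (hrho : 0 < rho) :
    ∀ (n : ℕ) (t : ℝ), 0 ≤ t →
      ENNReal.ofReal (Real.exp (-(rho * t)) * (rho * t) ^ n / n.factorial) ≤
        Measure.pi (fun _ : Fin n => expMeasure rho) {x | ∑ i, x i ≤ t} := by
  haveI := isProbabilityMeasure_expMeasure hrho
  intro n
  induction n with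
  | zero =>
    intro t ht
    have hset : {x : Fin 0 → ℝ | ∑ i, x i ≤ t} = Set.univ := by
      ext x; simp [ht]
    rw [hset, measure_univ]
    simp only [pow_zero, Nat.factorial_zero, Nat.cast_one, mul_one, div_one]
    exact ENNReal.ofReal_le_one.mpr (Real.exp_le_one_iff.mpr (neg_nonpos.mpr (mul_nonneg hrho.le ht)))
  | succ n ih =>
    intro t ht
    -- identify the measure of the simplex with an integral
    set ν : Measure ℝ := expMeasure rho with hν
    set B : Set (ℝ × (Fin n → ℝ)) := {p | p.1 + ∑ j, p.2 j ≤ t} with hB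
    have hBmeas : MeasurableSet B := by
      apply measurableSet_le _ measurable_const
      exact measurable_fst.add (Finset.measurable_sum Finset.univ
        fun j _ => (measurable_pi_apply j).comp measurable_snd)
    have hpre : {x : Fin (n + 1) → ℝ | ∑ i, x i ≤ t} =
        (MeasurableEquiv.piFinSuccAbove (fun _ => ℝ) 0) ⁻¹' B := by
      ext x
      simp only [Set.mem_setOf_eq, Set.mem_preimage, hB, MeasurableEquiv.piFinSuccAbove,
        MeasurableEquiv.coe_mk, Fin.insertNthEquiv, Equiv.coe_fn_symm_mk, Fin.removeNth]
      rw [Fin.sum_univ_succAbove x 0]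
    have hmp := measurePreserving_piFinSuccAbove (fun _ : Fin (n + 1) => ν) 0
    have hkey : Measure.pi (fun _ : Fin (n + 1) => ν) {x | ∑ i, x i ≤ t}
        = (ν.prod (Measure.pi fun _ : Fin n => ν)) B := by
      rw [hpre]
      exact hmp.measure_preimage hBmeas.nullMeasurableSet
    rw [hkey, Measure.prod_apply hBmeas]
    have hsec : ∀ y : ℝ, Prod.mk y ⁻¹' B = {x : Fin n → ℝ | ∑ j, x j ≤ t - y} := by
      intro y; ext x; simp only [hB, Set.mem_preimage, Set.mem_setOf_eq]; constructor <;> intro h <;> linarith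
    -- lower bound by indicator
    set f : ℝ → ℝ := fun y => rho * Real.exp (-(rho * y)) *
      (Real.exp (-(rho * (t - y))) * (rho * (t - y)) ^ n / n.factorial) with hf
    have hstep : ∀ y : ℝ, (Set.Icc (0:ℝ) t).indicator
        (fun y => ENNReal.ofReal (Real.exp (-(rho * (t - y))) * (rho * (t - y)) ^ n / n.factorial)) y
        ≤ (Measure.pi fun _ : Fin n => ν) (Prod.mk y ⁻¹' B) := by
      intro y
      by_cases hy : y ∈ Set.Icc (0:ℝ) t
      · rw [Set.indicator_of_mem hy, hsec y]
        exact ih (t - y) (by linarith [hy.2])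
      · rw [Set.indicator_of_notMem hy]
        exact zero_le
    calc ENNReal.ofReal (Real.exp (-(rho * t)) * (rho * t) ^ (n + 1) / (n + 1).factorial)
        = ∫⁻ y, (Set.Icc (0:ℝ) t).indicator
            (fun y => ENNReal.ofReal (Real.exp (-(rho * (t - y))) * (rho * (t - y)) ^ n / n.factorial)) y ∂ν := by
          have hfac_ne : (n.factorial : ℝ) ≠ 0 := Nat.cast_ne_zero.mpr n.factorial_ne_zero
          have hgmeas : Measurable (fun y : ℝ =>
              ENNReal.ofReal (Real.exp (-(rho * (t - y))) * (rho * (t - y)) ^ n / n.factorial)) := by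
            apply Measurable.ennreal_ofReal
            fun_prop
          have hemeas : Measurable (exponentialPDF rho) :=
            (measurable_exponentialPDFReal rho).ennreal_ofReal
          have hνdef : ν = volume.withDensity (exponentialPDF rho) := rfl
          rw [lintegral_indicator measurableSet_Icc, hνdef,
            MeasureTheory.restrict_withDensity measurableSet_Icc,
            lintegral_withDensity_eq_lintegral_mul _ hemeas hgmeas]
          have hcong : ∫⁻ y in Set.Icc (0:ℝ) t, (exponentialPDF rho * fun y =>
              ENNReal.ofReal (Real.exp (-(rho * (t - y))) * (rho * (t - y)) ^ n / n.factorial)) y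
              = ∫⁻ y in Set.Icc (0:ℝ) t, ENNReal.ofReal (f y) := by
            apply setLIntegral_congr_fun measurableSet_Icc
            intro y hy
            simp only [Pi.mul_apply]
            rw [exponentialPDF_of_nonneg hy.1, ← ENNReal.ofReal_mul (by positivity), hf]
          rw [hcong]
          have hfnn : 0 ≤ᵐ[volume.restrict (Set.Icc (0:ℝ) t)] f := by
            refine (ae_restrict_iff' measurableSet_Icc).mpr (ae_of_all _ fun y hy => ?_)
            have h1 : 0 ≤ t - y := by linarith [hy.2]
            rw [hf]
            positivity
          have hfint : Integrable f (volume.restrict (Set.Icc (0:ℝ) t)) := by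
            apply Continuous.integrableOn_Icc
            rw [hf]
            fun_prop
          rw [← MeasureTheory.ofReal_integral_eq_lintegral_ofReal hfint hfnn]
          congr 1
          have hfy : ∀ y : ℝ, f y =
              (Real.exp (-(rho * t)) * rho ^ (n + 1) / n.factorial) * (t - y) ^ n := by
            intro y
            have hee : Real.exp (-(rho * y)) * Real.exp (-(rho * (t - y))) =
                Real.exp (-(rho * t)) := by
              rw [← Real.exp_add]; ring_nf
            simp only [hf]
            rw [mul_pow]
            field_simp
            linear_combination (rho ^ (n + 1) * (t - y) ^ n) * hee
          rw [MeasureTheory.integral_congr_ae (ae_of_all _ hfy)]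
          rw [MeasureTheory.integral_Icc_eq_integral_Ioc,
            ← intervalIntegral.integral_of_le ht, intervalIntegral.integral_const_mul,
            intervalIntegral.integral_comp_sub_left (fun u => u ^ n) t, integral_pow]
          rw [Nat.factorial_succ]
          push_cast
          rw [mul_pow]
          field_simp
          ring
      _ ≤ ∫⁻ y, (Measure.pi fun _ : Fin n => ν) (Prod.mk y ⁻¹' B) ∂ν :=
          lintegral_mono hstep

theorem exponential_lower_tail_lower_bound
    {Omega : Type*} [MeasurableSpace Omega] (P : Measure Omega) [IsProbabilityMeasure P]
    (rho : ℝ) (hrho : 0 < rho) (n : ℕ)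
    (Y : Fin n → Omega → ℝ)
    (hmeas : ∀ i, Measurable (Y i))
    (hindep : iIndepFun Y P)
    (hdist : ∀ i, Measure.map (Y i) P = expMeasure rho)
    (mu : ℝ) (hmu : mu = 1 / rho)
    (lam : ℝ) (hlam : lam ∈ Set.Ioo (0 : ℝ) 1) (hn : 1 ≤ n) :
    Real.exp (-(n : ℝ) * ((lam - 1 - Real.log lam) + Real.log (2 * Real.pi * n) / (2 * n)
        + 1 / (12 * (n : ℝ) ^ 2))) ≤
      (P {omega | (∑ i, Y i omega) / n ≤ lam * mu}).toReal := by
  obtain ⟨hlam0, hlam1⟩ := hlam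
  have hn0 : (0 : ℝ) < n := by exact_mod_cast Nat.lt_of_lt_of_le Nat.zero_lt_one hn
  have hmu0 : 0 < mu := by rw [hmu]; positivity
  set t : ℝ := lam * mu * n with htdef
  have ht : 0 ≤ t := by positivity
  have hrt : rho * t = lam * n := by
    rw [htdef, hmu]; field_simp
  -- rewrite the event
  have hsum_meas : MeasurableSet {x : Fin n → ℝ | ∑ i, x i ≤ t} := by
    apply measurableSet_le _ measurable_const
    exact Finset.measurable_sum Finset.univ fun j _ => measurable_pi_apply j
  have hset : {omega | (∑ i, Y i omega) / n ≤ lam * mu} =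
      (fun ω (i : Fin n) => Y i ω) ⁻¹' {x | ∑ i, x i ≤ t} := by
    ext ω
    simp only [Set.mem_setOf_eq, Set.mem_preimage, htdef]
    rw [div_le_iff₀ hn0]
  have hmeas_tuple : Measurable (fun ω (i : Fin n) => Y i ω) :=
    measurable_pi_lambda _ fun i => hmeas i
  have hlow : ENNReal.ofReal (Real.exp (-(rho * t)) * (rho * t) ^ n / n.factorial) ≤
      P {omega | (∑ i, Y i omega) / n ≤ lam * mu} := by
    rw [hset, ← Measure.map_apply hmeas_tuple hsum_meas,
      map_tuple_eq_pi P rho hrho Y hmeas hindep hdist]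
    exact pi_exp_sum_ge rho hrho n t ht
  rw [hrt] at hlow
  have hq_nonneg : 0 ≤ Real.exp (-(lam * n)) * (lam * n) ^ n / n.factorial := by positivity
  have htoReal : Real.exp (-(lam * n)) * (lam * n) ^ n / n.factorial ≤
      (P {omega | (∑ i, Y i omega) / n ≤ lam * mu}).toReal := by
    have := ENNReal.toReal_mono (measure_ne_top P _) hlow
    rwa [ENNReal.toReal_ofReal hq_nonneg] at this
  refine le_trans ?_ htoReal
  -- Stirling comparison
  set D : ℝ := Real.sqrt (2 * Real.pi * n) * ((n : ℝ) / Real.exp 1) ^ n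
      * Real.exp (1 / (12 * (n : ℝ))) with hD
  have hD_pos : 0 < D := by rw [hD]; positivity
  have hfac_pos : (0 : ℝ) < n.factorial := by exact_mod_cast n.factorial_pos
  have hfacD : (n.factorial : ℝ) ≤ D := factorial_le_stirling n hn
  have hdiv : Real.exp (-(lam * n)) * (lam * n) ^ n / D ≤
      Real.exp (-(lam * n)) * (lam * n) ^ n / n.factorial := by
    apply div_le_div_of_nonneg_left _ hfac_pos hfacD
    positivity
  refine le_trans (le_of_eq ?_) hdiv
  -- express everything as exponentials
  have hlamn : (0 : ℝ) < lam * n := by positivity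
  have hnum : Real.exp (-(lam * n)) * (lam * n) ^ n =
      Real.exp (-(lam * n) + n * Real.log (lam * n)) := by
    rw [Real.exp_add]
    congr 1
    rw [← Real.exp_log hlamn, ← Real.exp_nat_mul, Real.exp_log hlamn]
  have h2pin : (0 : ℝ) < 2 * Real.pi * n := by positivity
  have hsqrt : Real.sqrt (2 * Real.pi * n) = Real.exp (Real.log (2 * Real.pi * n) / 2) := by
    rw [← Real.log_sqrt h2pin.le, Real.exp_log (Real.sqrt_pos.mpr h2pin)]
  have hpow : ((n : ℝ) / Real.exp 1) ^ n = Real.exp (n * (Real.log n - 1)) := by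
    have hnd : (0 : ℝ) < (n : ℝ) / Real.exp 1 := by positivity
    rw [← Real.exp_log hnd, ← Real.exp_nat_mul]
    congr 1
    rw [Real.log_div (ne_of_gt hn0) (Real.exp_ne_zero 1), Real.log_exp]
  have hDexp : D = Real.exp (Real.log (2 * Real.pi * n) / 2 + n * (Real.log n - 1)
      + 1 / (12 * (n : ℝ))) := by
    rw [hD, hsqrt, hpow, ← Real.exp_add, ← Real.exp_add]
  rw [hnum, hDexp, ← Real.exp_sub]
  congr 1
  rw [Real.log_mul (ne_of_gt hlam0) (ne_of_gt hn0)]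
  have hne : (n : ℝ) ≠ 0 := ne_of_gt hn0
  field_simp
  ring
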